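/- The polynomials K_j(N,ℓ;q;s) satisfy the backward contiguity relation K_j(N,ℓ;q;s) = (q^ℓ - q^{j-1}) K_{j-1}(N-1,ℓ;q;s) + q^j K_j(N-1,ℓ;q;s), valid for 0 ≤ j ≤ min(N,ℓ) and 0 ≤ s ≤ min(N-1,ℓ). -/

import Mathlib

noncomputable section

/-- q-Pochhammer symbol `(a;q)_k = ∏_{i=0}^{k-1} (1 - a q^i)`. -/
def qPoch (q a : ℝ) (k : ℕ) : ℝ := ∏ i ∈ Finset.range k, (1 - a * q ^ i)

/-- Gaussian (q-binomial) coefficient `[n choose m]_q`. -/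
def gbinom (q : ℝ) (n m : ℕ) : ℝ := qPoch q q n / (qPoch q q m * qPoch q q (n - m))

/-- Terminating basic hypergeometric series `₃φ₂(a₁,a₂,a₃;b₁,b₂ | q, z)`,
summed up to degree `deg`. -/
def phi32 (q a1 a2 a3 b1 b2 z : ℝ) (deg : ℕ) : ℝ :=
  ∑ k ∈ Finset.range (deg + 1),
    (qPoch q a1 k * qPoch q a2 k * qPoch q a3 k) /
      (qPoch q b1 k * qPoch q b2 k * qPoch q q k) * z ^ k

/-- Normalized affine q-Krawtchouk polynomial `K_j(N,ℓ;q;s)`, with the convention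
that it vanishes when `j` is outside `[0, min(N,ℓ)]`. -/
def Kpoly (q : ℝ) (N ℓ : ℕ) (j s : ℤ) : ℝ :=
  if 0 ≤ j ∧ j ≤ min (N : ℤ) (ℓ : ℤ) then
    qPoch q (q ^ (-(ℓ : ℤ))) j.toNat * gbinom q N j.toNat * q ^ ((ℓ : ℤ) * j) *
      phi32 q (q ^ (-j)) 0 (q ^ (-s)) (q ^ (-(ℓ : ℤ))) (q ^ (-(N : ℤ))) q j.toNat
  else 0

/-- Normalized dual q-Hahn polynomial `E_i(N,m;q;r)`, with the convention
that it vanishes when `i` is outside `[0, min(N-m,m)]`. -/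
def Epoly (q : ℝ) (N m : ℕ) (i r : ℤ) : ℝ :=
  if 0 ≤ i ∧ i ≤ min ((N : ℤ) - (m : ℤ)) (m : ℤ) then
    q ^ (i * i) * gbinom q m i.toNat * gbinom q (N - m) i.toNat *
      phi32 q (q ^ (-i)) (q ^ (-r)) (q ^ (r - (N : ℤ) - 1)) (q ^ (-(m : ℤ)))
        (q ^ ((m : ℤ) - (N : ℤ))) q i.toNat
  else 0

namespace Aux7

variable {q : ℝ}

lemma qPoch_zero (q a : ℝ) : qPoch q a 0 = 1 := by simp [qPoch]

lemma qPoch_succ (q a : ℝ) (k : ℕ) : qPoch q a (k + 1) = qPoch q a k * (1 - a * q ^ k) :=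
  Finset.prod_range_succ _ _

lemma qPoch_succ' (q a : ℝ) (k : ℕ) : qPoch q a (k + 1) = (1 - a) * qPoch q (q * a) k := by
  rw [qPoch, Finset.prod_range_succ', qPoch, mul_comm]
  congr 1
  · simp
  · exact Finset.prod_congr rfl fun i _ => by ring

lemma qPoch_zero_arg (q : ℝ) (k : ℕ) : qPoch q 0 k = 1 := by simp [qPoch]

lemma zpow_ne_one' (hq : 1 < q) {w : ℤ} (hw : w ≠ 0) : q ^ w ≠ 1 := by
  rcases hw.lt_or_gt with h | h
  · exact ne_of_lt (zpow_lt_one_of_neg₀ hq h)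
  · exact ne_of_gt (one_lt_zpow₀ hq h)

lemma qPoch_zpow_ne_zero (hq : 1 < q) {z : ℤ} {k : ℕ} (h : ∀ i : ℕ, i < k → z + i ≠ 0) :
    qPoch q (q ^ z) k ≠ 0 := by
  have hq0 : q ≠ 0 := by positivity
  rw [qPoch, Finset.prod_ne_zero_iff]
  intro i hi
  have : q ^ z * q ^ i = q ^ (z + i) := by
    rw [← zpow_natCast q i, ← zpow_add₀ hq0]
  rw [this]
  exact sub_ne_zero.2 (Ne.symm (zpow_ne_one' hq (h i (Finset.mem_range.1 hi))))

lemma qPoch_q_ne_zero (hq : 1 < q) (k : ℕ) : qPoch q q k ≠ 0 := by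
  have := qPoch_zpow_ne_zero (q := q) (z := 1) (k := k) hq (fun i _ => by omega)
  simpa using this

lemma qPoch_neg_ne_zero (hq : 1 < q) {m k : ℕ} (h : k ≤ m) :
    qPoch q (q ^ (-(m : ℤ))) k ≠ 0 :=
  qPoch_zpow_ne_zero hq (fun i hi => by omega)

lemma qPoch_neg_eq_zero (hq : 1 < q) {m k : ℕ} (h : m < k) :
    qPoch q (q ^ (-(m : ℤ))) k = 0 := by
  have hq0 : q ≠ 0 := by positivity
  refine Finset.prod_eq_zero (Finset.mem_range.2 h) ?_
  rw [← zpow_natCast q m, ← zpow_add₀ hq0]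
  simp

lemma gbinom_self (hq : 1 < q) (n : ℕ) : gbinom q n n = 1 := by
  rw [gbinom, Nat.sub_self, qPoch_zero, mul_one, div_self (qPoch_q_ne_zero hq n)]

lemma gbinom_zero (hq : 1 < q) (n : ℕ) : gbinom q n 0 = 1 := by
  rw [gbinom, Nat.sub_zero, qPoch_zero, one_mul, div_self (qPoch_q_ne_zero hq n)]

lemma one_sub_q_pow_ne (hq : 1 < q) (m : ℕ) : 1 - q * q ^ m ≠ 0 := by
  have h1 : (1:ℝ) ≤ q ^ m := one_le_pow₀ hq.le
  have : 1 < q * q ^ m := by nlinarith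
  intro h; nlinarith

lemma gbinom_ratio1 (hq : 1 < q) (j d : ℕ) :
    gbinom q (j + d + 2) (j + 1)
      = gbinom q (j + d + 1) j * ((1 - q * q ^ (j + d + 1)) / (1 - q * q ^ j)) := by
  have e1 : j + d + 2 - (j + 1) = d + 1 := by omega
  have e2 : j + d + 1 - j = d + 1 := by omega
  rw [gbinom, gbinom, e1, e2, qPoch_succ q q (j + d + 1), qPoch_succ q q j]
  rw [div_mul_div_comm]
  have h1 := qPoch_q_ne_zero hq j
  have h2 := qPoch_q_ne_zero hq d
  have h3 := qPoch_q_ne_zero hq (d + 1)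
  have h4 := one_sub_q_pow_ne hq j
  field_simp

lemma gbinom_ratio2 (hq : 1 < q) (j d : ℕ) :
    gbinom q (j + d + 1) (j + 1)
      = gbinom q (j + d + 1) j * ((1 - q * q ^ d) / (1 - q * q ^ j)) := by
  have e1 : j + d + 1 - (j + 1) = d := by omega
  have e2 : j + d + 1 - j = d + 1 := by omega
  rw [gbinom, gbinom, e1, e2, qPoch_succ q q d, qPoch_succ q q j]
  rw [div_mul_div_comm]
  have h1 := qPoch_q_ne_zero hq j
  have h2 := qPoch_q_ne_zero hq d
  have h4 := one_sub_q_pow_ne hq j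
  have h5 := one_sub_q_pow_ne hq d
  field_simp

/-- The `k`-th term of the sum representing `Kpoly`. -/
def Kterm (q : ℝ) (N ℓ j s : ℕ) (k : ℕ) : ℝ :=
  qPoch q (q ^ (-(ℓ : ℤ))) j * gbinom q N j * q ^ ((ℓ : ℤ) * (j : ℤ)) *
    ((qPoch q (q ^ (-(j : ℤ))) k * qPoch q (q ^ (-(s : ℤ))) k) /
      (qPoch q (q ^ (-(ℓ : ℤ))) k * qPoch q (q ^ (-(N : ℤ))) k * qPoch q q k) * q ^ k)

lemma Kpoly_eq_sum (hq : 1 < q) (N ℓ j s : ℕ) (hjN : j ≤ N) (hjl : j ≤ ℓ) :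
    Kpoly q N ℓ j s = ∑ k ∈ Finset.range (j + 1), Kterm q N ℓ j s k := by
  have hcond : 0 ≤ (j : ℤ) ∧ (j : ℤ) ≤ min (N : ℤ) (ℓ : ℤ) :=
    ⟨Int.natCast_nonneg j, le_min (by exact_mod_cast hjN) (by exact_mod_cast hjl)⟩
  rw [Kpoly, if_pos hcond, phi32, Int.toNat_natCast, Finset.mul_sum]
  refine Finset.sum_congr rfl fun k _ => ?_
  rw [Kterm, qPoch_zero_arg]
  ring

set_option maxHeartbeats 1000000 in
lemma scalar7 (q Q P B Pl : ℝ) (ℓ j d k : ℕ) (hqne : q ≠ 0)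
    (hj1 : 1 - q * q ^ j ≠ 0)
    (hden1 : 1 - (q ^ (j + d + 2))⁻¹ ≠ 0)
    (hden2 : 1 - (q ^ (j + d + 1))⁻¹ * q ^ k ≠ 0)
    (hQ : Q ≠ 0) :
    Pl * (1 - (q ^ ℓ)⁻¹ * q ^ j) * (B * ((1 - q * q ^ (j + d + 1)) / (1 - q * q ^ j))) *
        (q ^ (ℓ * j) * q ^ ℓ) *
      ((1 - (q ^ (j + 1))⁻¹) * P / ((1 - (q ^ (j + d + 2))⁻¹) * Q)) =
    (q ^ ℓ - q ^ j) *
        (Pl * B * q ^ (ℓ * j) *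
          (P * (1 - (q ^ j)⁻¹ * q ^ k) / (Q * (1 - (q ^ (j + d + 1))⁻¹ * q ^ k)))) +
      q ^ j * q *
        (Pl * (1 - (q ^ ℓ)⁻¹ * q ^ j) * (B * ((1 - q * q ^ d) / (1 - q * q ^ j))) *
            (q ^ (ℓ * j) * q ^ ℓ) *
          ((1 - (q ^ (j + 1))⁻¹) * P / (Q * (1 - (q ^ (j + d + 1))⁻¹ * q ^ k)))) := by
  have e1 : Pl * (1 - (q ^ ℓ)⁻¹ * q ^ j) * (B * ((1 - q * q ^ (j + d + 1)) / (1 - q * q ^ j))) *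
        (q ^ (ℓ * j) * q ^ ℓ) *
      ((1 - (q ^ (j + 1))⁻¹) * P / ((1 - (q ^ (j + d + 2))⁻¹) * Q))
      = (Pl * (1 - (q ^ ℓ)⁻¹ * q ^ j) * B * (1 - q * q ^ (j + d + 1)) * q ^ (ℓ * j) * q ^ ℓ *
          (1 - (q ^ (j + 1))⁻¹) * P)
        / (1 - q * q ^ j) / ((1 - (q ^ (j + d + 2))⁻¹) * Q) := by ring
  have e2 : (q ^ ℓ - q ^ j) *
        (Pl * B * q ^ (ℓ * j) *
          (P * (1 - (q ^ j)⁻¹ * q ^ k) / (Q * (1 - (q ^ (j + d + 1))⁻¹ * q ^ k))))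
      = ((q ^ ℓ - q ^ j) * Pl * B * q ^ (ℓ * j) * P * (1 - (q ^ j)⁻¹ * q ^ k))
        / (Q * (1 - (q ^ (j + d + 1))⁻¹ * q ^ k)) := by ring
  have e3 : q ^ j * q *
        (Pl * (1 - (q ^ ℓ)⁻¹ * q ^ j) * (B * ((1 - q * q ^ d) / (1 - q * q ^ j))) *
            (q ^ (ℓ * j) * q ^ ℓ) *
          ((1 - (q ^ (j + 1))⁻¹) * P / (Q * (1 - (q ^ (j + d + 1))⁻¹ * q ^ k))))
      = (q ^ j * q * Pl * (1 - (q ^ ℓ)⁻¹ * q ^ j) * B * (1 - q * q ^ d) * q ^ (ℓ * j) * q ^ ℓ *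
          (1 - (q ^ (j + 1))⁻¹) * P)
        / (1 - q * q ^ j) / (Q * (1 - (q ^ (j + d + 1))⁻¹ * q ^ k)) := by ring
  rw [e1, e2, e3, div_div, div_div, div_add_div _ _ (mul_ne_zero hQ hden2)
      (mul_ne_zero hj1 (mul_ne_zero hQ hden2)),
    div_eq_div_iff (mul_ne_zero hj1 (mul_ne_zero hden1 hQ))
      (mul_ne_zero (mul_ne_zero hQ hden2) (mul_ne_zero hj1 (mul_ne_zero hQ hden2)))]
  have hp1 : (q : ℝ) ^ (j + 1) ≠ 0 := pow_ne_zero _ hqne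
  have hp2 : (q : ℝ) ^ (j + d + 2) ≠ 0 := pow_ne_zero _ hqne
  have hp3 : (q : ℝ) ^ (j + d + 1) ≠ 0 := pow_ne_zero _ hqne
  have hp4 : (q : ℝ) ^ j ≠ 0 := pow_ne_zero _ hqne
  have hp5 : (q : ℝ) ^ ℓ ≠ 0 := pow_ne_zero _ hqne
  field_simp
  ring

set_option maxHeartbeats 2000000 in
lemma core (hq : 1 < q) (ℓ j d k : ℕ) (hjl : j + 1 ≤ ℓ) (hk : k ≤ j + 1) :
    qPoch q (q ^ (-(ℓ : ℤ))) (j + 1) * gbinom q (j + d + 2) (j + 1) * q ^ ((ℓ : ℤ) * ((j : ℤ) + 1))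
      * (qPoch q (q ^ (-((j : ℤ) + 1))) k / qPoch q (q ^ (-((j : ℤ) + (d : ℤ) + 2))) k)
    = (q ^ (ℓ : ℤ) - q ^ (j : ℤ)) *
        (qPoch q (q ^ (-(ℓ : ℤ))) j * gbinom q (j + d + 1) j * q ^ ((ℓ : ℤ) * (j : ℤ))
          * (qPoch q (q ^ (-(j : ℤ))) k / qPoch q (q ^ (-((j : ℤ) + (d : ℤ) + 1))) k))
    + q ^ ((j : ℤ) + 1) *
        (qPoch q (q ^ (-(ℓ : ℤ))) (j + 1) * gbinom q (j + d + 1) (j + 1) * q ^ ((ℓ : ℤ) * ((j : ℤ) + 1))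
          * (qPoch q (q ^ (-((j : ℤ) + 1))) k / qPoch q (q ^ (-((j : ℤ) + (d : ℤ) + 1))) k)) := by
  have hq0 : (0:ℝ) < q := lt_trans one_pos hq
  have hqne : q ≠ 0 := ne_of_gt hq0
  have EX : q ^ ((ℓ : ℤ) * (j : ℤ)) = q ^ (ℓ * j) := by
    rw [← Nat.cast_mul, zpow_natCast]
  have EX1 : q ^ ((ℓ : ℤ) * ((j : ℤ) + 1)) = q ^ (ℓ * j) * q ^ ℓ := by
    have h : (ℓ : ℤ) * ((j : ℤ) + 1) = (↑(ℓ * j) : ℤ) + (↑ℓ : ℤ) := by push_cast; ring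
    rw [h, zpow_add₀ hqne, zpow_natCast, zpow_natCast]
  have El : q ^ (ℓ : ℤ) = q ^ ℓ := zpow_natCast q ℓ
  have Ej : q ^ (j : ℤ) = q ^ j := zpow_natCast q j
  have Ej1 : q ^ ((j : ℤ) + 1) = q ^ j * q := by
    rw [zpow_add₀ hqne, zpow_natCast, zpow_one]
  have Enl : q ^ (-(ℓ : ℤ)) = (q ^ ℓ : ℝ)⁻¹ := by
    rw [← zpow_natCast q ℓ, ← zpow_neg]
  have Enj : q ^ (-(j : ℤ)) = (q ^ j : ℝ)⁻¹ := by
    rw [← zpow_natCast q j, ← zpow_neg]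
  have Enj1 : q ^ (-((j : ℤ) + 1)) = (q ^ (j + 1) : ℝ)⁻¹ := by
    rw [show (-((j : ℤ) + 1)) = -((j + 1 : ℕ) : ℤ) by push_cast; ring, zpow_neg, zpow_natCast]
  have EnN : q ^ (-((j : ℤ) + (d : ℤ) + 2)) = (q ^ (j + d + 2) : ℝ)⁻¹ := by
    rw [show (-((j : ℤ) + (d : ℤ) + 2)) = -((j + d + 2 : ℕ) : ℤ) by push_cast; ring,
      zpow_neg, zpow_natCast]
  have EnN1 : q ^ (-((j : ℤ) + (d : ℤ) + 1)) = (q ^ (j + d + 1) : ℝ)⁻¹ := by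
    rw [show (-((j : ℤ) + (d : ℤ) + 1)) = -((j + d + 1 : ℕ) : ℤ) by push_cast; ring,
      zpow_neg, zpow_natCast]
  have hPl : qPoch q (q ^ (-(ℓ : ℤ))) (j + 1)
      = qPoch q (q ^ (-(ℓ : ℤ))) j * (1 - q ^ (-(ℓ : ℤ)) * q ^ j) := qPoch_succ _ _ _
  rw [hPl, gbinom_ratio1 hq, gbinom_ratio2 hq, EX, EX1, El, Ej, Ej1, Enl]
  set B := gbinom q (j + d + 1) j with hBdef
  have hj1 : (1:ℝ) - q * q ^ j ≠ 0 := one_sub_q_pow_ne hq j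
  have hpl : (q:ℝ) ^ ℓ ≠ 0 := pow_ne_zero _ hqne
  rcases k with _ | k
  · simp only [qPoch_zero]
    have hj1' : (1:ℝ) - q ^ j * q ≠ 0 := by rwa [mul_comm (q ^ j)]
    field_simp
    ring
  · have hkj : k ≤ j := by omega
    have hA : qPoch q (q ^ (-((j : ℤ) + 1))) (k + 1)
        = (1 - q ^ (-((j : ℤ) + 1))) * qPoch q (q ^ (-(j : ℤ))) k := by
      have h : q * q ^ (-((j : ℤ) + 1)) = q ^ (-(j : ℤ)) := by
        rw [show (-(j : ℤ)) = 1 + -((j : ℤ) + 1) by ring, zpow_add₀ hqne, zpow_one]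
      rw [qPoch_succ', h]
    have hB2 : qPoch q (q ^ (-(j : ℤ))) (k + 1)
        = qPoch q (q ^ (-(j : ℤ))) k * (1 - q ^ (-(j : ℤ)) * q ^ k) := qPoch_succ _ _ _
    have hC : qPoch q (q ^ (-((j : ℤ) + (d : ℤ) + 2))) (k + 1)
        = (1 - q ^ (-((j : ℤ) + (d : ℤ) + 2))) * qPoch q (q ^ (-((j : ℤ) + (d : ℤ) + 1))) k := by
      have h : q * q ^ (-((j : ℤ) + (d : ℤ) + 2)) = q ^ (-((j : ℤ) + (d : ℤ) + 1)) := by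
        rw [show (-((j : ℤ) + (d : ℤ) + 1)) = 1 + -((j : ℤ) + (d : ℤ) + 2) by ring,
          zpow_add₀ hqne, zpow_one]
      rw [qPoch_succ', h]
    have hD : qPoch q (q ^ (-((j : ℤ) + (d : ℤ) + 1))) (k + 1)
        = qPoch q (q ^ (-((j : ℤ) + (d : ℤ) + 1))) k
            * (1 - q ^ (-((j : ℤ) + (d : ℤ) + 1)) * q ^ k) := qPoch_succ _ _ _
    rw [hA, hB2, hC, hD]
    set P := qPoch q (q ^ (-(j : ℤ))) k with hPdef
    have hQever : qPoch q (q ^ (-((j : ℤ) + (d : ℤ) + 1))) k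
        = qPoch q (q ^ (-((j + d + 1 : ℕ) : ℤ))) k := by
      rw [show (-((j : ℤ) + (d : ℤ) + 1)) = -((j + d + 1 : ℕ) : ℤ) by push_cast; ring]
    have hQ : qPoch q (q ^ (-((j : ℤ) + (d : ℤ) + 1))) k ≠ 0 := by
      rw [hQever]; exact qPoch_neg_ne_zero hq (by omega)
    set Q := qPoch q (q ^ (-((j : ℤ) + (d : ℤ) + 1))) k with hQdef
    rw [Enj, Enj1, EnN, EnN1]
    have hden1 : (1 : ℝ) - (q ^ (j + d + 2) : ℝ)⁻¹ ≠ 0 := by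
      have h1 : (1:ℝ) < q ^ (j + d + 2) := one_lt_pow₀ hq (by omega)
      have h2 : (q ^ (j + d + 2) : ℝ)⁻¹ < 1 := inv_lt_one_of_one_lt₀ h1
      intro h; nlinarith
    have hden2 : (1 : ℝ) - (q ^ (j + d + 1) : ℝ)⁻¹ * q ^ k ≠ 0 := by
      have h1 : (q:ℝ) ^ k < q ^ (j + d + 1) := pow_lt_pow_right₀ hq (by omega)
      have h3 : (0:ℝ) < q ^ (j + d + 1) := by positivity
      have h2 : (q ^ (j + d + 1) : ℝ)⁻¹ * q ^ k < 1 := by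
        rw [inv_mul_lt_one₀ h3]; exact h1
      intro h; nlinarith
    clear_value P Q
    clear hPl hA hB2 hC hD hQever hPdef hQdef EX EX1 El Ej Ej1 Enl Enj Enj1 EnN EnN1
    exact scalar7 q Q P B (qPoch q (q ^ ℓ)⁻¹ j) ℓ j d k hqne hj1 hden1 hden2 hQ

lemma termwise (hq : 1 < q) (ℓ j d s k : ℕ) (hjl : j + 1 ≤ ℓ) (hk : k ≤ j + 1) :
    Kterm q (j + d + 2) ℓ (j + 1) s k
      = (q ^ (ℓ : ℤ) - q ^ (j : ℤ)) * Kterm q (j + d + 1) ℓ j s k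
        + q ^ ((j : ℤ) + 1) * Kterm q (j + d + 1) ℓ (j + 1) s k := by
  have c := core hq ℓ j d k hjl hk
  simp only [Kterm]
  push_cast
  linear_combination (qPoch q (q ^ (-(s : ℤ))) k * (q:ℝ) ^ k /
    (qPoch q (q ^ (-(ℓ : ℤ))) k * qPoch q q k)) * c

lemma coreTop (hq : 1 < q) (ℓ n k : ℕ) (hl : n + 1 ≤ ℓ) (hk : k ≤ n) :
    qPoch q (q ^ (-(ℓ : ℤ))) (n + 1) * gbinom q (n + 1) (n + 1) * q ^ ((ℓ : ℤ) * ((n : ℤ) + 1))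
      * (qPoch q (q ^ (-((n : ℤ) + 1))) k / qPoch q (q ^ (-((n : ℤ) + 1))) k)
    = (q ^ (ℓ : ℤ) - q ^ (n : ℤ)) *
        (qPoch q (q ^ (-(ℓ : ℤ))) n * gbinom q n n * q ^ ((ℓ : ℤ) * (n : ℤ))
          * (qPoch q (q ^ (-(n : ℤ))) k / qPoch q (q ^ (-(n : ℤ))) k)) := by
  have hq0 : (0:ℝ) < q := lt_trans one_pos hq
  have hqne : q ≠ 0 := ne_of_gt hq0
  have h1 : qPoch q (q ^ (-((n : ℤ) + 1))) k ≠ 0 := by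
    rw [show (-((n : ℤ) + 1)) = -((n + 1 : ℕ) : ℤ) by push_cast; ring]
    exact qPoch_neg_ne_zero hq (by omega)
  have h2 : qPoch q (q ^ (-(n : ℤ))) k ≠ 0 := qPoch_neg_ne_zero hq (by omega)
  rw [div_self h1, div_self h2, gbinom_self hq, gbinom_self hq,
    qPoch_succ q _ n]
  have EX1 : q ^ ((ℓ : ℤ) * ((n : ℤ) + 1)) = q ^ ((ℓ : ℤ) * (n : ℤ)) * q ^ (ℓ : ℤ) := by
    rw [show (ℓ : ℤ) * ((n : ℤ) + 1) = (ℓ : ℤ) * (n : ℤ) + (ℓ : ℤ) by ring, zpow_add₀ hqne]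
  rw [EX1]
  have Enl : q ^ (-(ℓ : ℤ)) = (q ^ (ℓ : ℤ) : ℝ)⁻¹ := by rw [← zpow_neg]
  have hpl : (q:ℝ) ^ (ℓ : ℤ) ≠ 0 := zpow_ne_zero _ hqne
  rw [Enl, zpow_natCast q n]
  field_simp

lemma termwiseTop (hq : 1 < q) (ℓ n s k : ℕ) (hl : n + 1 ≤ ℓ) (hk : k ≤ n) :
    Kterm q (n + 1) ℓ (n + 1) s k
      = (q ^ (ℓ : ℤ) - q ^ (n : ℤ)) * Kterm q n ℓ n s k := by
  have c := coreTop hq ℓ n k hl hk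
  simp only [Kterm]
  push_cast
  linear_combination (qPoch q (q ^ (-(s : ℤ))) k * (q:ℝ) ^ k /
    (qPoch q (q ^ (-(ℓ : ℤ))) k * qPoch q q k)) * c

end Aux7

open Aux7 in
/-- Backward contiguity relation for the normalized affine q-Krawtchouk polynomials:
`K_j(N,ℓ;q;s) = (q^ℓ - q^{j-1}) K_{j-1}(N-1,ℓ;q;s) + q^j K_j(N-1,ℓ;q;s)`. -/
theorem stmt7 (q : ℝ) (hq : 1 < q) (N ℓ : ℕ) (hN : 1 ≤ N) (j s : ℕ)
    (hj : j ≤ min N ℓ) (hs : s ≤ min (N - 1) ℓ) :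
    Kpoly q N ℓ j s
      = (q ^ (ℓ : ℤ) - q ^ ((j : ℤ) - 1)) * Kpoly q (N - 1) ℓ ((j : ℤ) - 1) s
        + q ^ (j : ℤ) * Kpoly q (N - 1) ℓ j s := by
  have hq0 : (0:ℝ) < q := lt_trans one_pos hq
  have hqne : q ≠ 0 := ne_of_gt hq0
  have hjN : j ≤ N := le_trans hj (min_le_left _ _)
  have hjl : j ≤ ℓ := le_trans hj (min_le_right _ _)
  rcases Nat.eq_zero_or_pos j with rfl | hj0
  · -- j = 0
    simp only [Nat.cast_zero, zero_sub]
    have hneg : Kpoly q (N - 1) ℓ (-1) s = 0 := by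
      rw [Kpoly, if_neg]
      rintro ⟨h, -⟩
      norm_num at h
    have hK0 : ∀ M : ℕ, Kpoly q M ℓ ((0 : ℕ) : ℤ) s = 1 := by
      intro M
      rw [Kpoly_eq_sum hq M ℓ 0 s (Nat.zero_le _) (Nat.zero_le _), Finset.sum_range_one,
        Kterm]
      simp [qPoch_zero, gbinom_zero hq]
    have hK0' : ∀ M : ℕ, Kpoly q M ℓ (0 : ℤ) s = 1 := by
      intro M; have := hK0 M; simpa using this
    rw [hneg, hK0', hK0']
    norm_num
  · obtain ⟨j', rfl⟩ : ∃ j', j = j' + 1 := ⟨j - 1, by omega⟩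
    rcases Nat.lt_or_ge (j' + 1) N with hlt | hge
    · -- j < N
      obtain ⟨d, rfl⟩ : ∃ d, N = j' + d + 2 := ⟨N - j' - 2, by omega⟩
      have hsub : j' + d + 2 - 1 = j' + d + 1 := by omega
      rw [hsub, show ((↑(j' + 1) : ℤ) - 1) = (j' : ℤ) from by push_cast; ring]
      rw [Kpoly_eq_sum hq _ _ _ _ (by omega) (by omega),
        Kpoly_eq_sum hq _ _ _ _ (by omega) (by omega),
        Kpoly_eq_sum hq _ _ _ _ (by omega) (by omega)]
      have hext : ∑ k ∈ Finset.range (j' + 1), Kterm q (j' + d + 1) ℓ j' s k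
          = ∑ k ∈ Finset.range (j' + 2), Kterm q (j' + d + 1) ℓ j' s k := by
        have hz : Kterm q (j' + d + 1) ℓ j' s (j' + 1) = 0 := by
          rw [Kterm, qPoch_neg_eq_zero hq (show j' < j' + 1 by omega)]
          simp
        rw [Finset.sum_range_succ _ (j' + 1), hz, add_zero]
      rw [hext, Finset.mul_sum, Finset.mul_sum, ← Finset.sum_add_distrib]
      refine Finset.sum_congr rfl fun k hk => ?_
      have hk' : k ≤ j' + 1 := by
        have := Finset.mem_range.1 hk; omega
      rw [show ((↑(j' + 1) : ℤ)) = (j' : ℤ) + 1 from by push_cast; ring]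
      exact termwise hq ℓ j' d s k (by omega) hk'
    · -- j = N
      obtain rfl : N = j' + 1 := by omega
      set n := j' with hn
      have hsub : n + 1 - 1 = n := by omega
      rw [hsub]
      have hzero : Kpoly q n ℓ ((n + 1 : ℕ) : ℤ) s = 0 := by
        rw [Kpoly, if_neg]
        rintro ⟨-, h⟩
        rw [le_min_iff] at h
        have := h.1
        norm_cast at this
        omega
      rw [hzero, mul_zero, add_zero,
        show ((↑(n + 1) : ℤ) - 1) = (n : ℤ) from by push_cast; ring]
      rw [Kpoly_eq_sum hq _ _ _ _ (by omega) (by omega),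
        Kpoly_eq_sum hq _ _ _ _ (by omega) (by omega)]
      rw [Finset.sum_range_succ]
      have hz : Kterm q (n + 1) ℓ (n + 1) s (n + 1) = 0 := by
        have hs' : s < n + 1 := by omega
        rw [Kterm, qPoch_neg_eq_zero hq hs']
        simp
      rw [hz, add_zero, Finset.mul_sum]
      refine Finset.sum_congr rfl fun k hk => ?_
      have hk' : k ≤ n := by
        have := Finset.mem_range.1 hk; omega
      exact termwiseTop hq ℓ n s k (by omega) hk'
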